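/- Let z : ℝ^d → Δ^{K} be measurable with values in the probability simplex, σ > 0, and define ẑ^c(x) = E_{η~N(0,σ²I)}[z^c(x+η)] for each class c. Fix x and label y, and suppose ẑ^y(x) ≥ max_{y'≠y} ẑ^{y'}(x). Let R = (σ/2)[Φ⁻¹(ẑ^y(x)) − Φ⁻¹(max_{y'≠y} ẑ^{y'}(x))]. Then for every δ with ‖δ‖₂ < R, argmax_c ẑ^c(x+δ) = y (i.e., ẑ^y(x+δ) ≥ ẑ^{y'}(x+δ) for all y' ≠ y). -/

import Mathlib

open MeasureTheory Real Set

noncomputable def Phi (x : ℝ) : ℝ :=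
  ∫ t in Set.Iic x, (Real.sqrt (2 * Real.pi))⁻¹ * Real.exp (-t ^ 2 / 2)

noncomputable def PhiInv : ℝ → ℝ := Function.invFun Phi

lemma stdg_eq : (fun t : ℝ => (Real.sqrt (2 * Real.pi))⁻¹ * Real.exp (-t ^ 2 / 2))
    = fun t : ℝ => (Real.sqrt (2 * Real.pi))⁻¹ * Real.exp (-(1/2) * t ^ 2) := by
  funext t; ring_nf

lemma stdg_pos (t : ℝ) : 0 < (Real.sqrt (2 * Real.pi))⁻¹ * Real.exp (-t ^ 2 / 2) := by
  positivity

lemma stdg_integrable :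
    Integrable (fun t : ℝ => (Real.sqrt (2 * Real.pi))⁻¹ * Real.exp (-t ^ 2 / 2)) := by
  rw [stdg_eq]
  exact (integrable_exp_neg_mul_sq (by norm_num : (0:ℝ) < 1/2)).const_mul _

lemma stdg_integral : ∫ t : ℝ, (Real.sqrt (2 * Real.pi))⁻¹ * Real.exp (-t ^ 2 / 2) = 1 := by
  rw [stdg_eq]
  rw [integral_const_mul, integral_gaussian]
  rw [show π / (1/2) = 2 * π by ring]
  rw [inv_mul_cancel₀ (by positivity : Real.sqrt (2*π) ≠ 0)]

lemma Phi_strictMono : StrictMono Phi := by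
  intro a b hab
  have h1 : Phi b - Phi a = ∫ t in a..b, (Real.sqrt (2 * Real.pi))⁻¹ * Real.exp (-t ^ 2 / 2) :=
    intervalIntegral.integral_Iic_sub_Iic (stdg_integrable.integrableOn) (stdg_integrable.integrableOn)
  have h2 : 0 < ∫ t in a..b, (Real.sqrt (2 * Real.pi))⁻¹ * Real.exp (-t ^ 2 / 2) :=
    intervalIntegral.intervalIntegral_pos_of_pos
      (stdg_integrable.intervalIntegrable) (fun t => stdg_pos t) hab
  linarith

lemma Phi_tendsto_atTop : Filter.Tendsto Phi Filter.atTop (nhds 1) := by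
  have := ((aecover_Iic (Filter.tendsto_id (α := ℝ))).integral_tendsto_of_countably_generated
    stdg_integrable)
  rwa [stdg_integral] at this

lemma Phi_tendsto_atBot : Filter.Tendsto Phi Filter.atBot (nhds 0) := by
  have h1 := ((aecover_Ioi (Filter.tendsto_id (α := ℝ))).integral_tendsto_of_countably_generated
    stdg_integrable)
  have h2 : ∀ x : ℝ, Phi x = (∫ t : ℝ, (Real.sqrt (2 * Real.pi))⁻¹ * Real.exp (-t ^ 2 / 2))
      - ∫ t in Set.Ioi x, (Real.sqrt (2 * Real.pi))⁻¹ * Real.exp (-t ^ 2 / 2) := by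
    intro x
    have : Phi x + ∫ t in Set.Ioi x, (Real.sqrt (2 * Real.pi))⁻¹ * Real.exp (-t ^ 2 / 2)
        = ∫ t : ℝ, (Real.sqrt (2 * Real.pi))⁻¹ * Real.exp (-t ^ 2 / 2) := by
      rw [Phi, ← setIntegral_union (Iic_disjoint_Ioi le_rfl) measurableSet_Ioi
        stdg_integrable.integrableOn stdg_integrable.integrableOn, Iic_union_Ioi,
        setIntegral_univ]
    linarith
  have : Filter.Tendsto (fun x : ℝ => (∫ t : ℝ, (Real.sqrt (2 * Real.pi))⁻¹ * Real.exp (-t ^ 2 / 2))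
      - ∫ t in Set.Ioi x, (Real.sqrt (2 * Real.pi))⁻¹ * Real.exp (-t ^ 2 / 2))
      Filter.atBot (nhds ((∫ t : ℝ, (Real.sqrt (2 * Real.pi))⁻¹ * Real.exp (-t ^ 2 / 2))
        - ∫ t : ℝ, (Real.sqrt (2 * Real.pi))⁻¹ * Real.exp (-t ^ 2 / 2))) :=
    Filter.Tendsto.const_sub _ h1
  rw [sub_self] at this
  exact this.congr (fun x => (h2 x).symm)

lemma Phi_continuous : Continuous Phi := by
  have h : Continuous fun b : ℝ => ∫ t in (0:ℝ)..b, (Real.sqrt (2 * Real.pi))⁻¹ * Real.exp (-t ^ 2 / 2) :=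
    intervalIntegral.continuous_primitive (fun a b => stdg_integrable.intervalIntegrable) 0
  have h2 : ∀ x : ℝ, Phi x = Phi 0 + ∫ t in (0:ℝ)..x, (Real.sqrt (2 * Real.pi))⁻¹ * Real.exp (-t ^ 2 / 2) := by
    intro x
    have := intervalIntegral.integral_Iic_sub_Iic (a := (0:ℝ)) (b := x) (μ := volume)
      (stdg_integrable.integrableOn) (stdg_integrable.integrableOn)
    simp only [Phi] at *
    linarith
  have : Phi = fun x => Phi 0 + ∫ t in (0:ℝ)..x, (Real.sqrt (2 * Real.pi))⁻¹ * Real.exp (-t ^ 2 / 2) :=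
    funext h2
  rw [this]
  exact continuous_const.add h

lemma Phi_mem_Ioo (x : ℝ) : Phi x ∈ Set.Ioo (0:ℝ) 1 := by
  constructor
  · have h1 : (0:ℝ) ≤ Phi (x - 1) := by
      refine le_of_tendsto Phi_tendsto_atBot ?_
      filter_upwards [Filter.eventually_le_atBot (x - 1)] with t ht
      exact (Phi_strictMono.monotone ht)
    exact lt_of_le_of_lt h1 (Phi_strictMono (by linarith))
  · have h1 : Phi (x + 1) ≤ 1 := by
      refine ge_of_tendsto Phi_tendsto_atTop ?_
      filter_upwards [Filter.eventually_ge_atTop (x + 1)] with t ht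
      exact (Phi_strictMono.monotone ht)
    exact lt_of_lt_of_le (Phi_strictMono (by linarith)) h1

lemma Phi_surj {p : ℝ} (hp : p ∈ Set.Ioo (0:ℝ) 1) : ∃ t, Phi t = p := by
  obtain ⟨a, ha⟩ := (Phi_tendsto_atBot.eventually (gt_mem_nhds hp.1)).exists
  obtain ⟨b, hb⟩ := (Phi_tendsto_atTop.eventually (lt_mem_nhds hp.2)).exists
  have hab : a ≤ b := by
    by_contra hc
    push_neg at hc
    exact absurd (Phi_strictMono hc) (by linarith)
  have := intermediate_value_Icc hab Phi_continuous.continuousOn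
  obtain ⟨t, _, ht⟩ := this ⟨ha.le, hb.le⟩
  exact ⟨t, ht⟩

lemma Phi_PhiInv {p : ℝ} (hp : p ∈ Set.Ioo (0:ℝ) 1) : Phi (PhiInv p) = p :=
  Function.invFun_eq (Phi_surj hp)

lemma PhiInv_Phi (t : ℝ) : PhiInv (Phi t) = t :=
  Function.leftInverse_invFun Phi_strictMono.injective t

lemma PhiInv_mono {p q : ℝ} (hp : p ∈ Set.Ioo (0:ℝ) 1) (hq : q ∈ Set.Ioo (0:ℝ) 1)
    (hpq : p ≤ q) : PhiInv p ≤ PhiInv q := by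
  by_contra hc
  push_neg at hc
  have := Phi_strictMono hc
  rw [Phi_PhiInv hp, Phi_PhiInv hq] at this
  linarith

-- 1D gaussian with variance σ²
lemma gauss1_eq (σ : ℝ) (hσ : 0 < σ) :
    (fun t : ℝ => (2 * π * σ ^ 2) ^ (-(1:ℝ) / 2) * Real.exp (-t ^ 2 / (2 * σ ^ 2)))
    = fun t : ℝ => σ⁻¹ * ((Real.sqrt (2 * π))⁻¹ * Real.exp (-(σ⁻¹ * t) ^ 2 / 2)) := by
  funext t
  have h2π : (0:ℝ) < 2 * π := by positivity
  have h1 : (2 * π * σ ^ 2 : ℝ) ^ (-(1:ℝ) / 2) = (Real.sqrt (2 * π * σ ^ 2))⁻¹ := by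
    rw [show (-(1:ℝ)/2) = -(1/2) by ring, Real.rpow_neg (by positivity),
      Real.sqrt_eq_rpow]
  rw [h1, Real.sqrt_mul (by positivity), Real.sqrt_sq hσ.le]
  have : (-(σ⁻¹ * t) ^ 2 / 2) = -t ^ 2 / (2 * σ ^ 2) := by
    rw [mul_pow]
    rw [inv_pow]
    field_simp
  rw [this]
  rw [mul_inv]
  ring

lemma gauss1_cdf (σ : ℝ) (hσ : 0 < σ) (c : ℝ) :
    ∫ t in Set.Iic c, (2 * π * σ ^ 2) ^ (-(1:ℝ) / 2) * Real.exp (-t ^ 2 / (2 * σ ^ 2))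
      = Phi (c / σ) := by
  rw [gauss1_eq σ hσ]
  have hmeas : MeasurableSet (Set.Iic (c/σ)) := measurableSet_Iic
  have key : ∫ t : ℝ, Set.indicator (Set.Iic (c/σ))
        (fun s => (Real.sqrt (2 * π))⁻¹ * Real.exp (-s ^ 2 / 2)) (σ⁻¹ * t)
      = |σ⁻¹⁻¹| • ∫ s : ℝ, Set.indicator (Set.Iic (c/σ))
        (fun s => (Real.sqrt (2 * π))⁻¹ * Real.exp (-s ^ 2 / 2)) s :=
    MeasureTheory.Measure.integral_comp_mul_left _ _
  have hind : ∀ t : ℝ, Set.indicator (Set.Iic (c/σ))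
        (fun s => (Real.sqrt (2 * π))⁻¹ * Real.exp (-s ^ 2 / 2)) (σ⁻¹ * t)
      = Set.indicator (Set.Iic c)
        (fun t => (Real.sqrt (2 * π))⁻¹ * Real.exp (-(σ⁻¹ * t) ^ 2 / 2)) t := by
    intro t
    simp only [Set.indicator_apply, Set.mem_Iic, div_eq_inv_mul]
    by_cases ht : t ≤ c
    · have h2 : σ⁻¹ * t ≤ σ⁻¹ * c := mul_le_mul_of_nonneg_left ht (inv_pos.mpr hσ).le
      simp [ht, h2]
    · have h2 : ¬ σ⁻¹ * t ≤ σ⁻¹ * c := fun hc => ht (le_of_mul_le_mul_left hc (inv_pos.mpr hσ))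
      simp [ht, h2]
  have lhs1 : ∫ t in Set.Iic c, σ⁻¹ * ((Real.sqrt (2 * π))⁻¹ * Real.exp (-(σ⁻¹ * t) ^ 2 / 2))
      = σ⁻¹ * ∫ t in Set.Iic c, (Real.sqrt (2 * π))⁻¹ * Real.exp (-(σ⁻¹ * t) ^ 2 / 2) :=
    integral_const_mul _ _
  have lhs2 : ∫ t in Set.Iic c, (Real.sqrt (2 * π))⁻¹ * Real.exp (-(σ⁻¹ * t) ^ 2 / 2)
      = ∫ t : ℝ, Set.indicator (Set.Iic c)
        (fun t => (Real.sqrt (2 * π))⁻¹ * Real.exp (-(σ⁻¹ * t) ^ 2 / 2)) t :=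
    (integral_indicator measurableSet_Iic).symm
  have rhs2 : ∫ s : ℝ, Set.indicator (Set.Iic (c/σ))
        (fun s => (Real.sqrt (2 * π))⁻¹ * Real.exp (-s ^ 2 / 2)) s
      = Phi (c / σ) := by
    rw [integral_indicator measurableSet_Iic]; rfl
  rw [lhs1, lhs2, ← funext hind, key, rhs2, inv_inv, abs_of_pos hσ, smul_eq_mul,
    ← mul_assoc, inv_mul_cancel₀ hσ.ne', one_mul]

lemma gauss1_total (σ : ℝ) (hσ : 0 < σ) :
    ∫ t : ℝ, (2 * π * σ ^ 2) ^ (-(1:ℝ) / 2) * Real.exp (-t ^ 2 / (2 * σ ^ 2)) = 1 := by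
  rw [gauss1_eq σ hσ]
  have key : ∫ t : ℝ, σ⁻¹ * ((Real.sqrt (2 * π))⁻¹ * Real.exp (-(σ⁻¹ * t) ^ 2 / 2))
      = σ⁻¹ * ∫ t : ℝ, (fun s => (Real.sqrt (2 * π))⁻¹ * Real.exp (-s ^ 2 / 2)) (σ⁻¹ * t) :=
    integral_const_mul _ _
  rw [key, MeasureTheory.Measure.integral_comp_mul_left
    (fun s => (Real.sqrt (2 * π))⁻¹ * Real.exp (-s ^ 2 / 2)) σ⁻¹]
  have : ∫ s : ℝ, (Real.sqrt (2 * π))⁻¹ * Real.exp (-s ^ 2 / 2) = 1 := by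
    have h := integral_gaussian (1/2 : ℝ)
    have : (fun s : ℝ => (Real.sqrt (2 * π))⁻¹ * Real.exp (-s ^ 2 / 2))
        = fun s : ℝ => (Real.sqrt (2 * π))⁻¹ * Real.exp (-(1/2) * s ^ 2) := by
      funext s; ring_nf
    rw [this, integral_const_mul, h, show π / (1/2) = 2 * π by ring,
      inv_mul_cancel₀ (by positivity : Real.sqrt (2*π) ≠ 0)]
  rw [this, inv_inv, abs_of_pos hσ, smul_eq_mul, mul_one, inv_mul_cancel₀ hσ.ne']

lemma gauss1_integrable (σ : ℝ) (hσ : 0 < σ) :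
    Integrable (fun t : ℝ => (2 * π * σ ^ 2) ^ (-(1:ℝ) / 2) * Real.exp (-t ^ 2 / (2 * σ ^ 2))) := by
  have : (fun t : ℝ => (2 * π * σ ^ 2) ^ (-(1:ℝ) / 2) * Real.exp (-t ^ 2 / (2 * σ ^ 2)))
      = fun t : ℝ => (2 * π * σ ^ 2) ^ (-(1:ℝ) / 2) * Real.exp (-(1/(2*σ^2)) * t ^ 2) := by
    funext t
    congr 1
    congr 1
    field_simp
  rw [this]
  exact (integrable_exp_neg_mul_sq (by positivity : (0:ℝ) < 1/(2*σ^2))).const_mul _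

lemma gauss_proj (d : ℕ) (σ : ℝ) (hσ : 0 < σ) (u : EuclideanSpace ℝ (Fin d))
    (hu : ‖u‖ = 1) (c : ℝ) :
    ∫ η : EuclideanSpace ℝ (Fin d),
      (Set.indicator (Set.Iic c) (fun _ => (1:ℝ)) (inner ℝ u η : ℝ)) *
        ((2 * π * σ ^ 2) ^ (-(d:ℝ) / 2) * Real.exp (-‖η‖ ^ 2 / (2 * σ ^ 2)))
      = Phi (c / σ) := by
  have hd : d ≠ 0 := by
    rintro rfl
    have : u = 0 := Subsingleton.elim _ _
    rw [this, norm_zero] at hu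
    norm_num at hu
  have i₀ : Fin d := ⟨0, Nat.pos_of_ne_zero hd⟩
  -- orthonormal basis with b i₀ = u
  have horth : Orthonormal ℝ (Set.restrict {i₀} (fun _ : Fin d => u)) := by
    constructor
    · intro i; exact hu
    · intro i j hij
      exact absurd (Subsingleton.elim i j) hij
  obtain ⟨b, hb⟩ := horth.exists_orthonormalBasis_extension_of_card_eq
    (by simp [finrank_euclideanSpace])
  have hbu : b i₀ = u := hb i₀ (Set.mem_singleton i₀)
  have h2πσ : (0:ℝ) < 2 * π * σ ^ 2 := by positivity
  set C1 : ℝ := (2 * π * σ ^ 2) ^ (-(1:ℝ) / 2) with hC1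
  set Cd : ℝ := (2 * π * σ ^ 2) ^ (-(d:ℝ) / 2) with hCd
  have hCpow : C1 ^ d = Cd := by
    rw [hC1, hCd, ← Real.rpow_natCast ((2 * π * σ ^ 2) ^ (-(1:ℝ)/2)) d,
      ← Real.rpow_mul h2πσ.le]
    congr 1
    ring
  have hinner : ∀ η : EuclideanSpace ℝ (Fin d), (inner ℝ u η : ℝ) = b.repr η i₀ := by
    intro η
    rw [← hbu, b.repr_apply_apply]
  set F : EuclideanSpace ℝ (Fin d) → ℝ := fun w =>
    (Set.indicator (Set.Iic c) (fun _ => (1:ℝ)) (w i₀)) *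
      (Cd * Real.exp (-‖w‖ ^ 2 / (2 * σ ^ 2))) with hF
  have step1 : ∫ η : EuclideanSpace ℝ (Fin d),
      (Set.indicator (Set.Iic c) (fun _ => (1:ℝ)) (inner ℝ u η : ℝ)) *
        (Cd * Real.exp (-‖η‖ ^ 2 / (2 * σ ^ 2)))
      = ∫ w : EuclideanSpace ℝ (Fin d), F w := by
    rw [← b.measurePreserving_repr.integral_comp
      b.repr.toHomeomorph.measurableEmbedding F]
    congr 1
    funext η
    rw [hF]
    simp only [hinner η, b.repr.norm_map]
  set e := (MeasurableEquiv.toLp 2 (Fin d → ℝ)).symm with he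
  have vp := EuclideanSpace.volume_preserving_symm_measurableEquiv_toLp (Fin d)
  set g : Fin d → ℝ → ℝ := fun i t =>
    (if i = i₀ then Set.indicator (Set.Iic c) (fun _ => (1:ℝ)) t else 1) *
      (C1 * Real.exp (-t ^ 2 / (2 * σ ^ 2))) with hg
  have step2 : ∫ w : EuclideanSpace ℝ (Fin d), F w
      = ∫ v : Fin d → ℝ, ∏ i, g i (v i) := by
    rw [← (MeasurePreserving.symm e vp).integral_comp (MeasurableEquiv.measurableEmbedding e.symm) F]
    congr 1
    funext v
    have hcoord : ∀ i, (e.symm v) i = v i := by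
      intro i
      simp [he]
    have hnorm : ‖e.symm v‖ ^ 2 = ∑ i, v i ^ 2 := by
      rw [EuclideanSpace.norm_eq]
      rw [Real.sq_sqrt (Finset.sum_nonneg fun i _ => by positivity)]
      simp [hcoord, sq_abs]
    rw [hF]
    simp only [hcoord, hnorm]
    rw [Finset.prod_mul_distrib, Finset.prod_ite_eq' Finset.univ i₀
      (fun x => Set.indicator (Set.Iic c) (fun _ => (1:ℝ)) (v x))]
    simp only [Finset.mem_univ, if_true]
    congr 1
    rw [Finset.prod_mul_distrib, Finset.prod_const, Finset.card_univ, Fintype.card_fin, hCpow,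
      ← Real.exp_sum]
    congr 1
    rw [← Finset.sum_div, ← Finset.sum_neg_distrib]
  have step3 : ∫ v : Fin d → ℝ, ∏ i, g i (v i) = ∏ i, ∫ t : ℝ, g i t :=
    MeasureTheory.integral_fintype_prod_eq_prod (ι := Fin d) g
  have hgint : ∀ i, ∫ t : ℝ, g i t = if i = i₀ then Phi (c / σ) else 1 := by
    intro i
    by_cases hi : i = i₀
    · rw [if_pos hi]
      have : (fun t => g i t) = Set.indicator (Set.Iic c)
          (fun t => C1 * Real.exp (-t ^ 2 / (2 * σ ^ 2))) := by
        funext t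
        rw [hg]
        simp only [if_pos hi, Set.indicator_apply]
        by_cases ht : t ∈ Set.Iic c <;> simp [ht]
      rw [this, integral_indicator measurableSet_Iic]
      exact gauss1_cdf σ hσ c
    · rw [if_neg hi]
      have : (fun t => g i t) = fun t => C1 * Real.exp (-t ^ 2 / (2 * σ ^ 2)) := by
        funext t
        rw [hg]
        simp [hi]
      rw [this]
      exact gauss1_total σ hσ
  calc ∫ η : EuclideanSpace ℝ (Fin d),
      (Set.indicator (Set.Iic c) (fun _ => (1:ℝ)) (inner ℝ u η : ℝ)) *
        ((2 * π * σ ^ 2) ^ (-(d:ℝ) / 2) * Real.exp (-‖η‖ ^ 2 / (2 * σ ^ 2)))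
      = ∫ w : EuclideanSpace ℝ (Fin d), F w := step1
    _ = ∫ v : Fin d → ℝ, ∏ i, g i (v i) := step2
    _ = ∏ i, ∫ t : ℝ, g i t := step3
    _ = ∏ i, if i = i₀ then Phi (c / σ) else 1 := by
        exact Finset.prod_congr rfl (fun i _ => hgint i)
    _ = Phi (c / σ) := by
        rw [Finset.prod_ite_eq' Finset.univ i₀ (fun _ => Phi (c / σ))]
        simp


section Core

variable {d : ℕ}

local notation "E" => EuclideanSpace ℝ (Fin d)

lemma rho_integrable (d : ℕ) (σ : ℝ) (hσ : 0 < σ) :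
    Integrable (fun η : EuclideanSpace ℝ (Fin d) =>
      (2 * π * σ ^ 2) ^ (-(d:ℝ) / 2) * Real.exp (-‖η‖ ^ 2 / (2 * σ ^ 2))) := by
  have h := (GaussianFourier.integrable_cexp_neg_mul_sq_norm_add
    (V := EuclideanSpace ℝ (Fin d)) (b := ((1/(2*σ^2) : ℝ) : ℂ))
    (by simpa using by positivity : (0:ℝ) < (1/(2*σ^2))) 0 0).norm
  have heq : (fun η : EuclideanSpace ℝ (Fin d) =>
      ‖Complex.exp (-((1/(2*σ^2) : ℝ) : ℂ) * (‖η‖:ℂ) ^ 2 + 0 * (inner ℝ (0:EuclideanSpace ℝ (Fin d)) η : ℝ))‖)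
      = fun η : EuclideanSpace ℝ (Fin d) => Real.exp (-‖η‖ ^ 2 / (2 * σ ^ 2)) := by
    funext η
    rw [Complex.norm_exp]
    congr 1
    have : (-((1/(2*σ^2) : ℝ) : ℂ) * (‖η‖:ℂ) ^ 2 + 0 * ((inner ℝ (0:EuclideanSpace ℝ (Fin d)) η : ℝ):ℂ))
        = ((-‖η‖ ^ 2 / (2 * σ ^ 2) : ℝ) : ℂ) := by
      push_cast
      ring
    rw [this, Complex.ofReal_re]
  rw [heq] at h
  exact h.const_mul _

lemma rho_continuous (d : ℕ) (σ : ℝ) :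
    Continuous (fun η : EuclideanSpace ℝ (Fin d) =>
      (2 * π * σ ^ 2) ^ (-(d:ℝ) / 2) * Real.exp (-‖η‖ ^ 2 / (2 * σ ^ 2))) := by
  fun_prop

lemma rho_pos (d : ℕ) (σ : ℝ) (hσ : 0 < σ) (η : EuclideanSpace ℝ (Fin d)) :
    0 < (2 * π * σ ^ 2) ^ (-(d:ℝ) / 2) * Real.exp (-‖η‖ ^ 2 / (2 * σ ^ 2)) := by
  have : (0:ℝ) < 2 * π * σ ^ 2 := by positivity
  positivity

lemma rho_shift_integrable (d : ℕ) (σ : ℝ) (hσ : 0 < σ) (δ : EuclideanSpace ℝ (Fin d)) :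
    Integrable (fun η : EuclideanSpace ℝ (Fin d) =>
      (2 * π * σ ^ 2) ^ (-(d:ℝ) / 2) * Real.exp (-‖η - δ‖ ^ 2 / (2 * σ ^ 2))) := by
  have h := (rho_integrable d σ hσ).comp_sub_right δ
  exact h

lemma bdd_mul_integrable (d : ℕ) {f g : EuclideanSpace ℝ (Fin d) → ℝ}
    (hf : Measurable f) (hf0 : ∀ η, 0 ≤ f η) (hf1 : ∀ η, f η ≤ 1)
    (hg : Integrable g) (hg0 : ∀ η, 0 ≤ g η) :
    Integrable (fun η => f η * g η) := by
  refine Integrable.mono' hg (hf.aestronglyMeasurable.mul hg.aestronglyMeasurable) ?_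
  filter_upwards with η
  rw [Real.norm_eq_abs, abs_mul, abs_of_nonneg (hf0 η), abs_of_nonneg (hg0 η)]
  calc f η * g η ≤ 1 * g η := mul_le_mul_of_nonneg_right (hf1 η) (hg0 η)
    _ = g η := one_mul _

lemma core (d : ℕ) (σ : ℝ) (hσ : 0 < σ) (h : EuclideanSpace ℝ (Fin d) → ℝ)
    (hmeas : Measurable h) (h0 : ∀ η, 0 ≤ h η) (h1 : ∀ η, h η ≤ 1)
    (δ : EuclideanSpace ℝ (Fin d)) (p : ℝ) (hp : p ∈ Set.Ioo (0:ℝ) 1)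
    (hpeq : ∫ η, h η * ((2 * π * σ ^ 2) ^ (-(d:ℝ) / 2) * Real.exp (-‖η‖ ^ 2 / (2 * σ ^ 2))) = p) :
    Phi (PhiInv p - ‖δ‖ / σ) ≤
      ∫ η, h η * ((2 * π * σ ^ 2) ^ (-(d:ℝ) / 2) * Real.exp (-‖η - δ‖ ^ 2 / (2 * σ ^ 2))) := by
  set ρ : EuclideanSpace ℝ (Fin d) → ℝ :=
    fun η => (2 * π * σ ^ 2) ^ (-(d:ℝ) / 2) * Real.exp (-‖η‖ ^ 2 / (2 * σ ^ 2)) with hρ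
  set ρδ : EuclideanSpace ℝ (Fin d) → ℝ :=
    fun η => (2 * π * σ ^ 2) ^ (-(d:ℝ) / 2) * Real.exp (-‖η - δ‖ ^ 2 / (2 * σ ^ 2)) with hρδ
  show Phi (PhiInv p - ‖δ‖ / σ) ≤ ∫ η, h η * ρδ η
  have hI3 : ∫ η, h η * ρ η = p := hpeq
  rcases eq_or_ne δ 0 with rfl | hδ0
  · have : ∀ η : EuclideanSpace ℝ (Fin d), ρδ η = ρ η := by
      intro η
      rw [hρδ, hρ]
      simp
    rw [norm_zero, zero_div, sub_zero, Phi_PhiInv hp]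
    refine le_of_eq ?_
    rw [← hI3]
    congr 1
    funext η
    rw [this η]
  have hδ : 0 < ‖δ‖ := norm_pos_iff.mpr hδ0
  set u : EuclideanSpace ℝ (Fin d) := ‖δ‖⁻¹ • δ with hu'
  have hu : ‖u‖ = 1 := by
    rw [hu', norm_smul, norm_inv, norm_norm, inv_mul_cancel₀ hδ.ne']
  set a : ℝ := PhiInv p with ha
  set k : ℝ := Real.exp ((σ * a * ‖δ‖ - ‖δ‖ ^ 2 / 2) / σ ^ 2) with hk
  set s : EuclideanSpace ℝ (Fin d) → ℝ := fun η => (inner ℝ u η : ℝ) with hs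
  have hsmeas : Measurable s := by
    have : Continuous s := by
      rw [hs]
      exact continuous_const.inner continuous_id
    exact this.measurable
  set indH : EuclideanSpace ℝ (Fin d) → ℝ :=
    fun η => Set.indicator (Set.Iic (σ * a)) (fun _ => (1:ℝ)) (s η) with hind
  have hindmeas : Measurable indH :=
    (measurable_const.indicator measurableSet_Iic).comp hsmeas
  have hind0 : ∀ η, 0 ≤ indH η := fun η => Set.indicator_nonneg (fun _ _ => zero_le_one) _
  have hind1 : ∀ η, indH η ≤ 1 := by
    intro η
    rw [hind]
    dsimp only
    by_cases hx : s η ∈ Set.Iic (σ * a)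
    · rw [Set.indicator_of_mem hx]
    · rw [Set.indicator_of_notMem hx]; norm_num
  have hinnerδ : ∀ η : EuclideanSpace ℝ (Fin d), (inner ℝ η δ : ℝ) = ‖δ‖ * s η := by
    intro η
    rw [hs]
    dsimp only
    rw [hu', real_inner_smul_left, real_inner_comm, ← mul_assoc,
      mul_inv_cancel₀ hδ.ne', one_mul]
  have hratio : ∀ η, ρδ η = ρ η * Real.exp ((‖δ‖ * s η - ‖δ‖ ^ 2 / 2) / σ ^ 2) := by
    intro η
    rw [hρδ, hρ]
    dsimp only
    rw [mul_assoc ((2 * π * σ ^ 2) ^ (-(d:ℝ) / 2)), ← Real.exp_add]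
    congr 2
    rw [show ‖η - δ‖ ^ 2 = ‖η‖ ^ 2 - 2 * (inner ℝ η δ : ℝ) + ‖δ‖ ^ 2 from norm_sub_sq_real η δ,
      hinnerδ η]
    field_simp
    ring
  have hρ0 : ∀ η, 0 < ρ η := fun η => rho_pos d σ hσ η
  have hρδ0 : ∀ η, 0 < ρδ η := by
    intro η
    rw [hρδ]
    exact rho_pos d σ hσ (η - δ)
  have hmono1 : ∀ η, s η ≤ σ * a → ρδ η ≤ k * ρ η := by
    intro η hsη
    rw [hratio η, hk, mul_comm (Real.exp _) (ρ η)]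
    refine mul_le_mul_of_nonneg_left (Real.exp_le_exp.mpr ?_) (hρ0 η).le
    apply div_le_div_of_nonneg_right ?_ (by positivity)
    nlinarith
  have hmono2 : ∀ η, σ * a ≤ s η → k * ρ η ≤ ρδ η := by
    intro η hsη
    rw [hratio η, hk, mul_comm (Real.exp _) (ρ η)]
    refine mul_le_mul_of_nonneg_left (Real.exp_le_exp.mpr ?_) (hρ0 η).le
    apply div_le_div_of_nonneg_right ?_ (by positivity)
    nlinarith
  have hρint : Integrable ρ := rho_integrable d σ hσ
  have hρδint : Integrable ρδ := rho_shift_integrable d σ hσ δ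
  have I1int := bdd_mul_integrable d hmeas h0 h1 hρδint (fun η => (hρδ0 η).le)
  have I2int := bdd_mul_integrable d hindmeas hind0 hind1 hρδint (fun η => (hρδ0 η).le)
  have I3int := bdd_mul_integrable d hmeas h0 h1 hρint (fun η => (hρ0 η).le)
  have I4int := bdd_mul_integrable d hindmeas hind0 hind1 hρint (fun η => (hρ0 η).le)
  have hI4 : ∫ η, indH η * ρ η = p := by
    have hgp := gauss_proj d σ hσ u hu (σ * a)
    have : ∫ η, indH η * ρ η
        = ∫ η : EuclideanSpace ℝ (Fin d),
          (Set.indicator (Set.Iic (σ * a)) (fun _ => (1:ℝ)) (inner ℝ u η : ℝ)) *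
            ((2 * π * σ ^ 2) ^ (-(d:ℝ) / 2) * Real.exp (-‖η‖ ^ 2 / (2 * σ ^ 2))) := rfl
    rw [this, hgp, mul_div_cancel_left₀ a hσ.ne', ha, Phi_PhiInv hp]
  have hI2 : ∫ η, indH η * ρδ η = Phi (a - ‖δ‖ / σ) := by
    have htrans : ∫ η, indH η * ρδ η = ∫ η, indH (η + δ) * ρδ (η + δ) :=
      (integral_add_right_eq_self (fun η => indH η * ρδ η) δ).symm
    have hsu : ∀ η : EuclideanSpace ℝ (Fin d), s (η + δ) = s η + ‖δ‖ := by
      intro η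
      rw [hs]
      dsimp only
      rw [inner_add_right]
      congr 1
      rw [hu', real_inner_smul_left, real_inner_self_eq_norm_sq,
        pow_two, ← mul_assoc, inv_mul_cancel₀ hδ.ne', one_mul]
    have hindshift : ∀ η, indH (η + δ)
        = Set.indicator (Set.Iic (σ * a - ‖δ‖)) (fun _ => (1:ℝ)) (s η) := by
      intro η
      rw [hind]
      dsimp only
      rw [hsu η]
      simp only [Set.indicator_apply, Set.mem_Iic]
      congr 1
      simp only [eq_iff_iff]
      constructor
      · intro hh; linarith
      · intro hh; linarith
    have hρδshift : ∀ η : EuclideanSpace ℝ (Fin d), ρδ (η + δ) = ρ η := by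
      intro η
      rw [hρδ, hρ]
      dsimp only
      rw [add_sub_cancel_right]
    rw [htrans]
    have : ∫ η, indH (η + δ) * ρδ (η + δ)
        = ∫ η : EuclideanSpace ℝ (Fin d),
          (Set.indicator (Set.Iic (σ * a - ‖δ‖)) (fun _ => (1:ℝ)) (inner ℝ u η : ℝ)) *
            ((2 * π * σ ^ 2) ^ (-(d:ℝ) / 2) * Real.exp (-‖η‖ ^ 2 / (2 * σ ^ 2))) := by
      congr 1
      funext η
      rw [hindshift η, hρδshift η]
    rw [this, gauss_proj d σ hσ u hu (σ * a - ‖δ‖)]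
    congr 1
    field_simp
  have hNP : 0 ≤ ∫ η, (h η - indH η) * (ρδ η - k * ρ η) := by
    apply integral_nonneg
    intro η
    simp only [Pi.zero_apply]
    rcases le_or_gt (s η) (σ * a) with hsle | hslt
    · have e1 : indH η = 1 := by
        rw [hind]; dsimp only; rw [Set.indicator_of_mem (Set.mem_Iic.mpr hsle)]
      have e2 : ρδ η - k * ρ η ≤ 0 := sub_nonpos.mpr (hmono1 η hsle)
      have e3 : h η - indH η ≤ 0 := by rw [e1]; linarith [h1 η]
      nlinarith [mul_nonneg (neg_nonneg.mpr e3) (neg_nonneg.mpr e2)]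
    · have e1 : indH η = 0 := by
        rw [hind]; dsimp only
        rw [Set.indicator_of_notMem (by simpa using hslt.not_ge)]
      have e2 : 0 ≤ ρδ η - k * ρ η := sub_nonneg.mpr (hmono2 η hslt.le)
      have e3 : 0 ≤ h η - indH η := by rw [e1]; simpa using h0 η
      exact mul_nonneg e3 e2
  have expand : ∫ η, (h η - indH η) * (ρδ η - k * ρ η)
      = (∫ η, h η * ρδ η) - (∫ η, indH η * ρδ η)
        - k * (∫ η, h η * ρ η) + k * (∫ η, indH η * ρ η) := by
    have hfe : (fun η => (h η - indH η) * (ρδ η - k * ρ η))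
        = fun η => (h η * ρδ η) - (indH η * ρδ η) - k * (h η * ρ η) + k * (indH η * ρ η) := by
      funext η; ring
    rw [hfe]
    have iA2 : Integrable (fun η => h η * ρδ η - indH η * ρδ η) volume := I1int.sub I2int
    have iA3 : Integrable (fun η => k * (h η * ρ η)) volume := I3int.const_mul k
    have iA : Integrable (fun η => h η * ρδ η - indH η * ρδ η - k * (h η * ρ η)) volume :=
      iA2.sub iA3
    have iB : Integrable (fun η => k * (indH η * ρ η)) volume := I4int.const_mul k
    rw [integral_add iA iB, integral_sub iA2 iA3, integral_sub I1int I2int,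
      integral_const_mul, integral_const_mul]
  rw [expand, hI3, hI4, hI2] at hNP
  linarith

end Core

open scoped NNReal ENNReal

noncomputable def gaussMeasure (d : ℕ) (σ : ℝ) :
    Measure (EuclideanSpace ℝ (Fin d)) :=
  volume.withDensity fun x =>
    ENNReal.ofReal ((2 * Real.pi * σ ^ 2) ^ (-(d : ℝ) / 2) *
      Real.exp (-‖x‖ ^ 2 / (2 * σ ^ 2)))

theorem soft_rs_certification (d K : ℕ) (hK : 2 ≤ K) (σ : ℝ) (hσ : 0 < σ)
    (z : EuclideanSpace ℝ (Fin d) → Fin K → ℝ) (hz : Measurable z)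
    (hsimplex : ∀ x, (∀ c, 0 ≤ z x c) ∧ ∑ c, z x c = 1)
    (zhat : Fin K → EuclideanSpace ℝ (Fin d) → ℝ)
    (hzhat : ∀ c x, zhat c x = ∫ η, z (x + η) c ∂(gaussMeasure d σ))
    (hrange : ∀ c x, zhat c x ∈ Set.Ioo (0 : ℝ) 1)
    (x : EuclideanSpace ℝ (Fin d)) (y : Fin K)
    (hcorrect : ∀ y', y' ≠ y → zhat y' x ≤ zhat y x)
    (M : ℝ) (hM : IsGreatest {v | ∃ y', y' ≠ y ∧ v = zhat y' x} M)
    (R : ℝ) (hR : R = σ / 2 * (PhiInv (zhat y x) - PhiInv M)) :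
    ∀ δ : EuclideanSpace ℝ (Fin d), ‖δ‖ < R →
      ∀ y', y' ≠ y → zhat y' (x + δ) ≤ zhat y (x + δ) := by
  intro δ hδR y' hy'
  have hβ0 : (0:ℝ) ≤ ‖δ‖ / σ := by positivity
  -- convert zhat to explicit density integral
  have hmeasg : Measurable fun η : EuclideanSpace ℝ (Fin d) =>
      Real.toNNReal ((2 * π * σ ^ 2) ^ (-(d:ℝ) / 2) * Real.exp (-‖η‖ ^ 2 / (2 * σ ^ 2))) :=
    ((rho_continuous d σ).measurable).real_toNNReal
  have hconv : ∀ (c : Fin K) (x' : EuclideanSpace ℝ (Fin d)),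
      zhat c x' = ∫ η, z (x' + η) c *
        ((2 * π * σ ^ 2) ^ (-(d:ℝ) / 2) * Real.exp (-‖η‖ ^ 2 / (2 * σ ^ 2))) := by
    intro c x'
    rw [hzhat c x']
    have h1 : gaussMeasure d σ = volume.withDensity fun η =>
        ((Real.toNNReal ((2 * π * σ ^ 2) ^ (-(d:ℝ) / 2) *
          Real.exp (-‖η‖ ^ 2 / (2 * σ ^ 2))) : ℝ≥0) : ℝ≥0∞) := rfl
    rw [h1, integral_withDensity_eq_integral_smul hmeasg]
    congr 1
    funext η
    rw [NNReal.smul_def, smul_eq_mul,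
      Real.coe_toNNReal _ (rho_pos d σ hσ η).le, mul_comm]
  have hzc : ∀ (c : Fin K) (x' : EuclideanSpace ℝ (Fin d)),
      Measurable (fun η : EuclideanSpace ℝ (Fin d) => z (x' + η) c) :=
    fun c x' => ((measurable_pi_apply c).comp hz).comp (measurable_const.add measurable_id)
  have hz0 : ∀ w c, 0 ≤ z w c := fun w c => (hsimplex w).1 c
  have hz1 : ∀ w c, z w c ≤ 1 := by
    intro w c
    have h1 : z w c ≤ ∑ i, z w i :=
      Finset.single_le_sum (fun i _ => (hsimplex w).1 i) (Finset.mem_univ c)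
    rw [(hsimplex w).2] at h1
    exact h1
  -- lower bound for class y
  have key1 : Phi (PhiInv (zhat y x) - ‖δ‖ / σ) ≤ zhat y (x + δ) := by
    have e1 : zhat y (x + δ) = ∫ η, z (x + η) y *
        ((2 * π * σ ^ 2) ^ (-(d:ℝ) / 2) * Real.exp (-‖η - δ‖ ^ 2 / (2 * σ ^ 2))) := by
      rw [hconv y (x + δ)]
      have e2 := integral_add_right_eq_self (μ := (volume : Measure (EuclideanSpace ℝ (Fin d)))) (fun η : EuclideanSpace ℝ (Fin d) =>
        z (x + η) y * ((2 * π * σ ^ 2) ^ (-(d:ℝ) / 2) *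
          Real.exp (-‖η - δ‖ ^ 2 / (2 * σ ^ 2)))) δ
      rw [← e2]
      congr 1
      funext η
      rw [add_sub_cancel_right, show x + (η + δ) = x + δ + η by abel]
    rw [e1]
    exact core d σ hσ (fun η => z (x + η) y) (hzc y x) (fun η => hz0 _ _)
      (fun η => hz1 _ _) δ (zhat y x) (hrange y x) (hconv y x).symm
  -- upper bound for class y'
  have key2 : Phi (PhiInv (zhat y' (x + δ)) - ‖δ‖ / σ) ≤ zhat y' x := by
    have hcore := core d σ hσ (fun η => z (x + δ + η) y') (hzc y' (x + δ))
      (fun η => hz0 _ _) (fun η => hz1 _ _) (-δ) (zhat y' (x + δ))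
      (hrange y' (x + δ)) (hconv y' (x + δ)).symm
    rw [norm_neg] at hcore
    have e1 : ∫ η, z (x + δ + η) y' *
        ((2 * π * σ ^ 2) ^ (-(d:ℝ) / 2) * Real.exp (-‖η - -δ‖ ^ 2 / (2 * σ ^ 2)))
        = zhat y' x := by
      rw [hconv y' x]
      have e2 := integral_add_right_eq_self (μ := (volume : Measure (EuclideanSpace ℝ (Fin d)))) (fun η : EuclideanSpace ℝ (Fin d) =>
        z (x + η) y' * ((2 * π * σ ^ 2) ^ (-(d:ℝ) / 2) *
          Real.exp (-‖η‖ ^ 2 / (2 * σ ^ 2)))) δ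
      rw [← e2]
      congr 1
      funext η
      rw [sub_neg_eq_add, show x + (η + δ) = x + δ + η by abel]
    rw [e1] at hcore
    exact hcore
  have h1 : PhiInv (zhat y x) - ‖δ‖ / σ ≤ PhiInv (zhat y (x + δ)) := by
    by_contra hc
    push_neg at hc
    have := Phi_strictMono hc
    rw [Phi_PhiInv (hrange y (x + δ))] at this
    linarith
  have h2 : PhiInv (zhat y' (x + δ)) ≤ PhiInv (zhat y' x) + ‖δ‖ / σ := by
    by_contra hc
    push_neg at hc
    have hlt : PhiInv (zhat y' x) < PhiInv (zhat y' (x + δ)) - ‖δ‖ / σ := by linarith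
    have := Phi_strictMono hlt
    rw [Phi_PhiInv (hrange y' x)] at this
    linarith
  have hMrange : M ∈ Set.Ioo (0:ℝ) 1 := by
    obtain ⟨y'', hy'', hMeq⟩ := hM.1
    rw [hMeq]
    exact hrange y'' x
  have hy'M : zhat y' x ≤ M := hM.2 ⟨y', hy', rfl⟩
  have h3 : PhiInv (zhat y' x) ≤ PhiInv M := PhiInv_mono (hrange y' x) hMrange hy'M
  have hβlt : ‖δ‖ / σ < (PhiInv (zhat y x) - PhiInv M) / 2 := by
    rw [hR] at hδR
    have := (div_lt_div_iff_of_pos_right hσ).mpr hδR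
    calc ‖δ‖ / σ < σ / 2 * (PhiInv (zhat y x) - PhiInv M) / σ := this
      _ = (PhiInv (zhat y x) - PhiInv M) / 2 := by field_simp
  have final : PhiInv (zhat y' (x + δ)) ≤ PhiInv (zhat y (x + δ)) := by linarith
  have := Phi_strictMono.monotone final
  rwa [Phi_PhiInv (hrange y' (x + δ)), Phi_PhiInv (hrange y (x + δ))] at this
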